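/- Assume additionally 1 < 1/(2q1) + 1/(2q2) + 1/q3 (Region III). Then Σ_{t3∈ℤ} |r(0,0,t3)| = ∞. -/

import Mathlib

open Filter

private lemma aux_nat_summable {p : ℝ} (hp : 1 < p) :
    Summable (fun n : ℕ => (max (n : ℝ) 1) ^ (-p)) := by
  rw [← summable_nat_add_iff 1]
  have h : Summable (fun n : ℕ => ((n : ℝ)) ^ (-p)) :=
    Real.summable_nat_rpow.mpr (by linarith)
  have h2 := (summable_nat_add_iff (f := fun n : ℕ => ((n : ℝ)) ^ (-p)) 1).mpr h
  refine h2.congr fun n => ?_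
  have hmax : max ((n : ℝ) + 1) 1 = (n : ℝ) + 1 := max_eq_left (by have := Nat.cast_nonneg (α := ℝ) n; linarith)
  push_cast
  rw [hmax]

private lemma aux_int_summable {p : ℝ} (hp : 1 < p) :
    Summable (fun n : ℤ => (max |(n : ℝ)| 1) ^ (-p)) := by
  apply Summable.of_nat_of_neg
  · exact (aux_nat_summable hp).congr fun n => by
      simp [Nat.abs_cast]
  · exact (aux_nat_summable hp).congr fun n => by
      push_cast
      rw [abs_neg, Nat.abs_cast]

private lemma aux_prod3 {p1 p2 p3 : ℝ} (h1 : 1 < p1) (h2 : 1 < p2) (h3 : 1 < p3) :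
    Summable (fun s : ℤ × ℤ × ℤ =>
      (max |(s.1 : ℝ)| 1) ^ (-p1) *
        ((max |(s.2.1 : ℝ)| 1) ^ (-p2) * (max |(s.2.2 : ℝ)| 1) ^ (-p3))) := by
  have h23 := (aux_int_summable h2).mul_of_nonneg (aux_int_summable h3)
      (fun n => by positivity) (fun n => by positivity)
  exact (aux_int_summable h1).mul_of_nonneg h23
      (fun n => by positivity) (fun n => by positivity)

private lemma aux_pointwise {ν q1 q2 q3 θ1 θ2 θ3 c1 c2 c3 m1 m2 m3 : ℝ}
    (hν : 0 < ν) (hc1 : 0 < c1) (hc2 : 0 < c2) (hc3 : 0 < c3)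
    (hm1 : 0 < m1) (hm2 : 0 < m2) (hm3 : 0 < m3)
    (hθ1 : 0 < θ1) (hθ2 : 0 < θ2) (hθ3 : 0 < θ3) (hθsum : θ1 + θ2 + θ3 = 1) :
    ((c1 * m1 ^ (q1 / ν) + c2 * m2 ^ (q2 / ν) + c3 * m3 ^ (q3 / ν)) ^ ν)⁻¹ *
      ((c1 * m1 ^ (q1 / ν) + c2 * m2 ^ (q2 / ν) + c3 * m3 ^ (q3 / ν)) ^ ν)⁻¹ ≤
    (c1 ^ (2 * ν * θ1) * (c2 ^ (2 * ν * θ2) * c3 ^ (2 * ν * θ3)))⁻¹ *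
      (m1 ^ (-(2 * q1 * θ1)) * (m2 ^ (-(2 * q2 * θ2)) * m3 ^ (-(2 * q3 * θ3)))) := by
  have hP1 : (0:ℝ) < c1 * m1 ^ (q1 / ν) := by positivity
  have hP2 : (0:ℝ) < c2 * m2 ^ (q2 / ν) := by positivity
  have hP3 : (0:ℝ) < c3 * m3 ^ (q3 / ν) := by positivity
  set P1 := c1 * m1 ^ (q1 / ν) with hP1d
  set P2 := c2 * m2 ^ (q2 / ν) with hP2d
  set P3 := c3 * m3 ^ (q3 / ν) with hP3d
  set S := P1 + P2 + P3 with hSd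
  have hS : (0:ℝ) < S := by positivity
  set G := P1 ^ θ1 * P2 ^ θ2 * P3 ^ θ3 with hGd
  have hG : (0:ℝ) < G := by positivity
  have hGS : G ≤ S := by
    have h := Real.geom_mean_le_arith_mean3_weighted hθ1.le hθ2.le hθ3.le
      hP1.le hP2.le hP3.le hθsum
    have h1 : θ1 * P1 ≤ 1 * P1 := mul_le_mul_of_nonneg_right (by linarith) hP1.le
    have h2 : θ2 * P2 ≤ 1 * P2 := mul_le_mul_of_nonneg_right (by linarith) hP2.le
    have h3 : θ3 * P3 ≤ 1 * P3 := mul_le_mul_of_nonneg_right (by linarith) hP3.le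
    rw [hGd, hSd]; rw [one_mul] at h1 h2 h3; linarith
  have hGSν : G ^ ν ≤ S ^ ν := Real.rpow_le_rpow hG.le hGS hν.le
  have hGν : (0:ℝ) < G ^ ν := Real.rpow_pos_of_pos hG ν
  have hstep1 : (S ^ ν)⁻¹ * (S ^ ν)⁻¹ ≤ (G ^ ν)⁻¹ * (G ^ ν)⁻¹ := by
    have := inv_anti₀ hGν hGSν
    have h0 : (0:ℝ) ≤ (S ^ ν)⁻¹ := by positivity
    have h0' : (0:ℝ) ≤ (G ^ ν)⁻¹ := by positivity
    exact mul_le_mul this this h0 h0'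
  refine hstep1.trans (le_of_eq ?_)
  have hinv : (G ^ ν)⁻¹ * (G ^ ν)⁻¹ = (G ^ (2 * ν))⁻¹ := by
    rw [← mul_inv]
    congr 1
    rw [← Real.rpow_add hG]; congr 1; ring
  rw [hinv]
  have e1 : P1 ^ (θ1 * (2 * ν)) = c1 ^ (2 * ν * θ1) * m1 ^ (2 * q1 * θ1) := by
    rw [hP1d, Real.mul_rpow hc1.le (Real.rpow_nonneg hm1.le _), ← Real.rpow_mul hm1.le,
      show q1 / ν * (θ1 * (2 * ν)) = 2 * q1 * θ1 by field_simp,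
      show θ1 * (2 * ν) = 2 * ν * θ1 by ring]
  have e2 : P2 ^ (θ2 * (2 * ν)) = c2 ^ (2 * ν * θ2) * m2 ^ (2 * q2 * θ2) := by
    rw [hP2d, Real.mul_rpow hc2.le (Real.rpow_nonneg hm2.le _), ← Real.rpow_mul hm2.le,
      show q2 / ν * (θ2 * (2 * ν)) = 2 * q2 * θ2 by field_simp,
      show θ2 * (2 * ν) = 2 * ν * θ2 by ring]
  have e3 : P3 ^ (θ3 * (2 * ν)) = c3 ^ (2 * ν * θ3) * m3 ^ (2 * q3 * θ3) := by
    rw [hP3d, Real.mul_rpow hc3.le (Real.rpow_nonneg hm3.le _), ← Real.rpow_mul hm3.le,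
      show q3 / ν * (θ3 * (2 * ν)) = 2 * q3 * θ3 by field_simp,
      show θ3 * (2 * ν) = 2 * ν * θ3 by ring]
  have hexp : G ^ (2 * ν) = (c1 ^ (2 * ν * θ1) * m1 ^ (2 * q1 * θ1)) *
      ((c2 ^ (2 * ν * θ2) * m2 ^ (2 * q2 * θ2)) * (c3 ^ (2 * ν * θ3) * m3 ^ (2 * q3 * θ3))) := by
    rw [hGd, Real.mul_rpow (by positivity) (by positivity),
      Real.mul_rpow (by positivity) (by positivity),
      ← Real.rpow_mul hP1.le, ← Real.rpow_mul hP2.le, ← Real.rpow_mul hP3.le, e1, e2, e3]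
    ring
  rw [hexp, Real.rpow_neg hm1.le, Real.rpow_neg hm2.le, Real.rpow_neg hm3.le,
    ← mul_inv, ← mul_inv, ← mul_inv]
  congr 1
  ring

private lemma aux_card_Icc (n : ℕ) : ((Finset.Icc (0:ℤ) (n:ℤ)).card : ℝ) = (n : ℝ) + 1 := by
  rw [Int.card_Icc]
  have : ((n:ℤ) + 1 - 0).toNat = n + 1 := by omega
  rw [this]
  push_cast
  ring

private lemma arith1 {q1 q2 q3 : ℝ} (hq1 : 0 < q1) (hq2 : 0 < q2) (hq3 : 0 < q3)
    (hQlow : 1 < 1 / q1 + 1 / q2 + 1 / q3) :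
    0 < q3 + (q3 / q1 + q3 / q2 + 1 - 2 * q3) := by
  have h1 : q3 * (1 / q1 + 1 / q2 + 1 / q3) = q3 / q1 + q3 / q2 + 1 := by
    field_simp
  nlinarith [mul_lt_mul_of_pos_left hQlow hq3]

private lemma arith2 {q1 q2 q3 : ℝ} (hq1 : 0 < q1) (hq2 : 0 < q2) (hq3 : 0 < q3)
    (hRegion : 1 < 1 / (2 * q1) + 1 / (2 * q2) + 1 / q3) :
    -1 < q3 / q1 + q3 / q2 + 1 - 2 * q3 := by
  have h2 : 2 * q3 * (1 / (2 * q1) + 1 / (2 * q2) + 1 / q3) = q3 / q1 + q3 / q2 + 2 := by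
    field_simp
  nlinarith [mul_lt_mul_of_pos_left hRegion (by positivity : (0:ℝ) < 2 * q3)]

set_option maxHeartbeats 10000000 in
theorem stmt_11 (q1 q2 q3 c1 c2 c3 ν : ℝ)
    (hq1 : 0 < q1) (hq2 : 0 < q2) (hq3 : 0 < q3)
    (hc1 : 0 < c1) (hc2 : 0 < c2) (hc3 : 0 < c3) (hν : 0 < ν)
    (g : ℤ × ℤ × ℤ → ℝ) (hg : ∃ M : ℝ, ∀ t, |g t| ≤ M)
    (hg1 : Tendsto g cofinite (nhds 1))
    (a : ℤ × ℤ × ℤ → ℝ)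
    (ha : ∀ t : ℤ × ℤ × ℤ, a t = g t /
      (c1 * (max |(t.1 : ℝ)| 1) ^ (q1 / ν) + c2 * (max |(t.2.1 : ℝ)| 1) ^ (q2 / ν) +
        c3 * (max |(t.2.2 : ℝ)| 1) ^ (q3 / ν)) ^ ν)
    (hQlow : 1 < 1 / q1 + 1 / q2 + 1 / q3)
    (hQup : 1 / q1 + 1 / q2 + 1 / q3 < 2)
    (r : ℤ × ℤ × ℤ → ℝ)
    (hr : ∀ t : ℤ × ℤ × ℤ, r t = ∑' s : ℤ × ℤ × ℤ, a s * a (t + s))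
    (hRegion : 1 < 1 / (2 * q1) + 1 / (2 * q2) + 1 / q3) :
    ¬ Summable (fun t3 : ℤ => |r (0, 0, t3)|) := by
  obtain ⟨M, hM⟩ := hg
  set M' : ℝ := max M 1 with hM'def
  have hM'1 : (1 : ℝ) ≤ M' := le_max_right _ _
  have hM'0 : (0 : ℝ) < M' := lt_of_lt_of_le one_pos hM'1
  have hM'g : ∀ t, |g t| ≤ M' := fun t => (hM t).trans (le_max_left _ _)
  set mn : ℤ → ℝ := fun n => max |(n : ℝ)| 1 with hmn
  have hmn1 : ∀ n, 1 ≤ mn n := fun n => le_max_right _ _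
  have hmn0 : ∀ n, 0 < mn n := fun n => lt_of_lt_of_le one_pos (hmn1 n)
  set den : ℤ × ℤ × ℤ → ℝ := fun s =>
    c1 * mn s.1 ^ (q1 / ν) + c2 * mn s.2.1 ^ (q2 / ν) + c3 * mn s.2.2 ^ (q3 / ν) with hdendef
  set D : ℤ × ℤ × ℤ → ℝ := fun s => (den s ^ ν)⁻¹ with hDdef
  set csum : ℝ := c1 + c2 + c3 with hcsum
  have hcsum0 : 0 < csum := by positivity
  have hden_ge : ∀ s, csum ≤ den s := by
    intro s
    have h1 : (1:ℝ) ≤ mn s.1 ^ (q1 / ν) := Real.one_le_rpow (hmn1 _) (by positivity)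
    have h2 : (1:ℝ) ≤ mn s.2.1 ^ (q2 / ν) := Real.one_le_rpow (hmn1 _) (by positivity)
    have h3 : (1:ℝ) ≤ mn s.2.2 ^ (q3 / ν) := Real.one_le_rpow (hmn1 _) (by positivity)
    simp only [hdendef, hcsum]
    nlinarith
  have hden_pos : ∀ s, 0 < den s := fun s => lt_of_lt_of_le hcsum0 (hden_ge s)
  have hD_pos : ∀ s, 0 < D s := fun s => by
    simp only [hDdef]
    exact inv_pos.mpr (Real.rpow_pos_of_pos (hden_pos s) ν)
  have hDmax : ∀ s, D s ≤ (csum ^ ν)⁻¹ := by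
    intro s
    simp only [hDdef]
    exact inv_anti₀ (Real.rpow_pos_of_pos hcsum0 ν)
      (Real.rpow_le_rpow hcsum0.le (hden_ge s) hν.le)
  have ha' : ∀ s, a s = g s * D s := by
    intro s
    rw [ha s, div_eq_mul_inv]
  have haabs : ∀ s, |a s| ≤ M' * D s := by
    intro s
    rw [ha' s, abs_mul, abs_of_pos (hD_pos s)]
    exact mul_le_mul_of_nonneg_right (hM'g s) (hD_pos s).le
  -- summability of D^2
  have hsumD2 : Summable (fun s => D s * D s) := by
    set δ : ℝ := (2 - (1 / q1 + 1 / q2 + 1 / q3)) / 6 with hδd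
    have hδpos : 0 < δ := by rw [hδd]; linarith
    have hθ1pos : 0 < 1 / (2 * q1) + δ := by positivity
    have hθ2pos : 0 < 1 / (2 * q2) + δ := by positivity
    have hθ3pos : 0 < 1 / (2 * q3) + δ := by positivity
    have hθsum : 1 / (2 * q1) + δ + (1 / (2 * q2) + δ) + (1 / (2 * q3) + δ) = 1 := by
      rw [hδd]; field_simp; ring
    have hp1 : 1 < 2 * q1 * (1 / (2 * q1) + δ) := by
      rw [show 2 * q1 * (1 / (2 * q1) + δ) = 1 + 2 * q1 * δ by field_simp]
      nlinarith [mul_pos hq1 hδpos]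
    have hp2 : 1 < 2 * q2 * (1 / (2 * q2) + δ) := by
      rw [show 2 * q2 * (1 / (2 * q2) + δ) = 1 + 2 * q2 * δ by field_simp]
      nlinarith [mul_pos hq2 hδpos]
    have hp3 : 1 < 2 * q3 * (1 / (2 * q3) + δ) := by
      rw [show 2 * q3 * (1 / (2 * q3) + δ) = 1 + 2 * q3 * δ by field_simp]
      nlinarith [mul_pos hq3 hδpos]
    refine Summable.of_nonneg_of_le (fun s => (mul_pos (hD_pos s) (hD_pos s)).le)
      (fun s => ?_)
      ((aux_prod3 hp1 hp2 hp3).mul_left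
        ((c1 ^ (2 * ν * (1 / (2 * q1) + δ)) *
          (c2 ^ (2 * ν * (1 / (2 * q2) + δ)) * c3 ^ (2 * ν * (1 / (2 * q3) + δ))))⁻¹))
    simp only [hDdef, hdendef, hmn]
    exact aux_pointwise hν hc1 hc2 hc3
      (lt_of_lt_of_le one_pos (le_max_right _ _))
      (lt_of_lt_of_le one_pos (le_max_right _ _))
      (lt_of_lt_of_le one_pos (le_max_right _ _))
      hθ1pos hθ2pos hθ3pos hθsum
  have hsumD2v : ∀ v : ℤ × ℤ × ℤ, Summable (fun s => D (v + s) * D (v + s)) := by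
    intro v
    have h := hsumD2.comp_injective (add_right_injective v)
    exact h.congr fun s => rfl
  have hsumDD : ∀ v : ℤ × ℤ × ℤ, Summable (fun s => D s * D (v + s)) := by
    intro v
    refine Summable.of_nonneg_of_le (fun s => by positivity)
      (fun s => ?_) (hsumD2.add (hsumD2v v))
    nlinarith [hD_pos s, hD_pos (v + s), sq_nonneg (D s - D (v + s))]
  have hsumaa : ∀ v : ℤ × ℤ × ℤ, Summable (fun s => a s * a (v + s)) := by
    intro v
    refine Summable.of_abs (Summable.of_nonneg_of_le (fun s => abs_nonneg _)
      (fun s => ?_) (((hsumDD v).mul_left (M' * M'))))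
    rw [abs_mul]
    calc |a s| * |a (v + s)| ≤ (M' * D s) * (M' * D (v + s)) :=
          mul_le_mul (haabs s) (haabs (v + s)) (abs_nonneg _) (by positivity)
      _ = M' * M' * (D s * D (v + s)) := by ring
  -- finite bad set
  have hge : ∀ᶠ s in cofinite, (1:ℝ)/2 < g s := hg1.eventually (eventually_gt_nhds (by norm_num))
  have hFfin : {s : ℤ × ℤ × ℤ | ¬ ((1:ℝ)/2 < g s)}.Finite := eventually_cofinite.mp hge
  set F : Finset (ℤ × ℤ × ℤ) := hFfin.toFinset with hFdef
  have hFmem : ∀ s, s ∉ F → (1:ℝ)/2 < g s := by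
    intro s hs
    by_contra h
    exact hs (hFfin.mem_toFinset.mpr h)
  set B : ℕ := F.sup (fun f => f.2.2.natAbs) with hBdef
  have hBmem : ∀ f ∈ F, |(f.2.2 : ℝ)| ≤ (B : ℝ) := by
    intro f hf
    have h := Finset.le_sup (f := fun f : ℤ × ℤ × ℤ => f.2.2.natAbs) hf
    rw [← Int.cast_abs]
    exact_mod_cast Int.abs_eq_natAbs f.2.2 ▸ (by exact_mod_cast h : (f.2.2.natAbs : ℤ) ≤ (B : ℤ))
  -- constants
  set κ1 : ℝ := (csum ^ ν)⁻¹ with hκ1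
  set κ2 : ℝ := (csum ^ ν * 2 ^ q3)⁻¹ with hκ2
  have hκ1pos : 0 < κ1 := by
    rw [hκ1]; exact inv_pos.mpr (Real.rpow_pos_of_pos hcsum0 ν)
  have hκ2pos : 0 < κ2 := by
    rw [hκ2]
    exact inv_pos.mpr (mul_pos (Real.rpow_pos_of_pos hcsum0 ν) (Real.rpow_pos_of_pos two_pos q3))
  set K1 : ℝ := M' * M' * ((csum ^ ν)⁻¹ * ((c3 ^ ν)⁻¹ * 2 ^ q3)) with hK1
  have hK1pos : 0 < K1 := by
    rw [hK1]
    have := Real.rpow_pos_of_pos hcsum0 ν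
    have := Real.rpow_pos_of_pos hc3 ν
    have := Real.rpow_pos_of_pos (two_pos : (0:ℝ) < 2) q3
    positivity
  set CF : ℝ := 4 * (F.card : ℝ) * K1 + 1 with hCF
  have hCFpos : 0 < CF := by positivity
  set β : ℝ := q3 / q1 + q3 / q2 + 1 - 2 * q3 with hβ
  have hq3β : 0 < q3 + β := by
    rw [hβ]; exact arith1 hq1 hq2 hq3 hQlow
  have hβgt : -1 < β := by
    rw [hβ]; exact arith2 hq1 hq2 hq3 hRegion
  clear_value M' mn den D csum κ1 κ2 K1 CF β B F
  -- key estimate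
  have key : ∀ t : ℕ, 2 * B + 2 ≤ t →
      (1/4 : ℝ) * κ1 * κ2 * (t : ℝ) ^ β - CF * (t : ℝ) ^ (-q3) ≤ r (0, 0, (t : ℤ)) := by
    intro t ht
    have hmnn : ∀ n : ℤ, (0:ℝ) ≤ mn n := fun n => (hmn0 n).le
    set T : ℝ := (t : ℝ) with hTd
    have hT2B : 2 * (B : ℝ) + 2 ≤ T := by rw [hTd]; exact_mod_cast ht
    have hBnn : (0:ℝ) ≤ (B : ℝ) := Nat.cast_nonneg _
    have hT1 : (1:ℝ) ≤ T := by linarith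
    have hT0 : (0:ℝ) < T := by linarith
    have hTq3 : (0:ℝ) < T ^ (-q3) := Real.rpow_pos_of_pos hT0 _
    set v : ℤ × ℤ × ℤ := ((0 : ℤ), (0 : ℤ), (t : ℤ)) with hvd
    have hv22 : ((v.2.2 : ℤ) : ℝ) = T := by rw [hvd, hTd]; norm_num
    clear_value T v
    -- small D bound for large third coordinate
    have hDsmall : ∀ s : ℤ × ℤ × ℤ, T / 2 ≤ |(s.2.2 : ℝ)| →
        D s ≤ (c3 ^ ν)⁻¹ * (2 ^ q3 * T ^ (-q3)) := by
      intro s hs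
      have hm : T / 2 ≤ mn s.2.2 := le_trans hs (by rw [hmn]; exact le_max_left _ _)
      have hT2' : (0:ℝ) < T / 2 := by linarith
      have hdenlow : c3 * (T / 2) ^ (q3 / ν) ≤ den s := by
        rw [hdendef]
        have h1 : (T / 2) ^ (q3 / ν) ≤ mn s.2.2 ^ (q3 / ν) :=
          Real.rpow_le_rpow hT2'.le hm (by positivity)
        have h2 : (0:ℝ) ≤ c1 * mn s.1 ^ (q1 / ν) :=
          mul_nonneg hc1.le (Real.rpow_nonneg (hmnn _) _)
        have h3 : (0:ℝ) ≤ c2 * mn s.2.1 ^ (q2 / ν) :=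
          mul_nonneg hc2.le (Real.rpow_nonneg (hmnn _) _)
        nlinarith
      have hpow : (c3 * (T / 2) ^ (q3 / ν)) ^ ν ≤ den s ^ ν :=
        Real.rpow_le_rpow (by positivity) hdenlow hν.le
      have heq : (c3 * (T / 2) ^ (q3 / ν)) ^ ν = c3 ^ ν * (T / 2) ^ q3 := by
        rw [Real.mul_rpow hc3.le (Real.rpow_nonneg hT2'.le _),
          ← Real.rpow_mul hT2'.le, show q3 / ν * ν = q3 by field_simp]
      rw [hDdef]
      calc (den s ^ ν)⁻¹ ≤ ((c3 * (T / 2) ^ (q3 / ν)) ^ ν)⁻¹ :=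
            inv_anti₀ (by positivity) hpow
        _ = (c3 ^ ν)⁻¹ * ((T / 2) ^ q3)⁻¹ := by rw [heq, mul_inv]
        _ = (c3 ^ ν)⁻¹ * (2 ^ q3 * T ^ (-q3)) := by
            rw [Real.div_rpow hT0.le (by norm_num : (0:ℝ) ≤ 2), Real.rpow_neg hT0.le,
              inv_div, div_eq_mul_inv]
    -- the bad set
    set bad : Finset (ℤ × ℤ × ℤ) := F ∪ F.image (fun f => f - v) with hbadd
    clear_value bad
    have hbadcard : (bad.card : ℝ) ≤ 2 * (F.card : ℝ) := by
      have h := Finset.card_union_le F (F.image (fun f => f - v))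
      have h2 := Finset.card_image_le (s := F) (f := fun f => f - v)
      rw [hbadd]
      push_cast
      have : (F ∪ F.image (fun f => f - v)).card ≤ F.card + F.card := by omega
      exact_mod_cast by push_cast; linarith [this]
    have hgood : ∀ s, s ∉ bad → (1/2 : ℝ) < g s ∧ (1/2 : ℝ) < g (v + s) := by
      intro s hs
      rw [hbadd, Finset.mem_union] at hs
      push_neg at hs
      refine ⟨hFmem s hs.1, hFmem _ (fun hc => hs.2 ?_)⟩
      exact Finset.mem_image.mpr ⟨v + s, hc, by abel⟩
    -- bad term bounds
    have hbadDD : ∀ s ∈ bad, D s * D (v + s) ≤ κ1 * ((c3 ^ ν)⁻¹ * (2 ^ q3 * T ^ (-q3))) := by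
      intro s hs
      have hbnd0 : (0:ℝ) ≤ (c3 ^ ν)⁻¹ * (2 ^ q3 * T ^ (-q3)) := by
        have := Real.rpow_pos_of_pos hc3 ν
        have := Real.rpow_pos_of_pos (show (0:ℝ) < 2 by norm_num) q3
        positivity
      rw [hbadd, Finset.mem_union] at hs
      rcases hs with hs | hs
      · have h1 := hBmem s hs
        have h2 : T / 2 ≤ |((v + s).2.2 : ℝ)| := by
          have he : (v + s).2.2 = (t : ℤ) + s.2.2 := by simp [hvd, Prod.snd_add]
          rw [he]
          push_cast
          rw [← hTd]
          have habs : T - |(s.2.2 : ℝ)| ≤ |(T + (s.2.2 : ℝ))| := by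
            have h := abs_sub_abs_le_abs_sub T (-(s.2.2 : ℝ))
            rw [abs_neg, sub_neg_eq_add] at h
            have h0 : |T| = T := abs_of_pos hT0
            linarith
          linarith
        exact mul_le_mul (hDmax s) (hDsmall _ h2) (hD_pos _).le hκ1pos.le
      · obtain ⟨f, hf, rfl⟩ := Finset.mem_image.mp hs
        have h1 := hBmem f hf
        have h2 : T / 2 ≤ |((f - v).2.2 : ℝ)| := by
          have he : (f - v).2.2 = f.2.2 - (t : ℤ) := by simp [hvd, Prod.snd_sub]
          rw [he]
          push_cast
          rw [← hTd]
          have habs : T - |(f.2.2 : ℝ)| ≤ |((f.2.2 : ℝ) - T)| := by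
            have h := abs_sub_abs_le_abs_sub T (f.2.2 : ℝ)
            rw [abs_sub_comm] at h
            have h0 : |T| = T := abs_of_pos hT0
            linarith
          linarith
        have he2 : v + (f - v) = f := by abel
        rw [he2]
        calc D (f - v) * D f ≤ ((c3 ^ ν)⁻¹ * (2 ^ q3 * T ^ (-q3))) * κ1 :=
              mul_le_mul (hDsmall _ h2) (hDmax f) (hD_pos _).le hbnd0
          _ = κ1 * ((c3 ^ ν)⁻¹ * (2 ^ q3 * T ^ (-q3))) := by ring
    have hK1T : κ1 * ((c3 ^ ν)⁻¹ * (2 ^ q3 * T ^ (-q3))) ≤ K1 * T ^ (-q3) := by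
      rw [hK1, hκ1]
      have hpos : (0:ℝ) ≤ (csum ^ ν)⁻¹ * ((c3 ^ ν)⁻¹ * (2 ^ q3 * T ^ (-q3))) := by
        have := Real.rpow_pos_of_pos hc3 ν
        have := Real.rpow_pos_of_pos (show (0:ℝ) < 2 by norm_num) q3
        have := Real.rpow_pos_of_pos hcsum0 ν
        positivity
      calc (csum ^ ν)⁻¹ * ((c3 ^ ν)⁻¹ * (2 ^ q3 * T ^ (-q3)))
          = 1 * ((csum ^ ν)⁻¹ * ((c3 ^ ν)⁻¹ * (2 ^ q3 * T ^ (-q3)))) := by ring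
        _ ≤ (M' * M') * ((csum ^ ν)⁻¹ * ((c3 ^ ν)⁻¹ * (2 ^ q3 * T ^ (-q3)))) := by
            apply mul_le_mul_of_nonneg_right _ hpos
            nlinarith
        _ = M' * M' * ((csum ^ ν)⁻¹ * ((c3 ^ ν)⁻¹ * 2 ^ q3)) * T ^ (-q3) := by ring
    have hbada : ∀ s ∈ bad, |a s * a (v + s)| ≤ K1 * T ^ (-q3) := by
      intro s hs
      rw [abs_mul]
      calc |a s| * |a (v + s)| ≤ (M' * D s) * (M' * D (v + s)) :=
            mul_le_mul (haabs s) (haabs (v + s)) (abs_nonneg _)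
              (mul_nonneg hM'0.le (hD_pos _).le)
        _ = M' * M' * (D s * D (v + s)) := by ring
        _ ≤ M' * M' * (κ1 * ((c3 ^ ν)⁻¹ * (2 ^ q3 * T ^ (-q3)))) := by
            apply mul_le_mul_of_nonneg_left (hbadDD s hs) (by positivity)
        _ = K1 * T ^ (-q3) := by rw [hK1, hκ1]; ring
    -- psi and chi
    set χ : ℤ × ℤ × ℤ → ℝ := fun s => if s ∈ bad then |a s * a (v + s)| else 0 with hχd
    set ψ : ℤ × ℤ × ℤ → ℝ := fun s => if s ∈ bad then 0 else (1/4) * (D s * D (v + s)) with hψd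
    clear_value χ ψ
    have hχ0 : ∀ s ∉ bad, χ s = 0 := fun s hs => by simp only [hχd, if_neg hs]
    have hχsum : Summable χ := summable_of_ne_finset_zero hχ0
    have hψnn : ∀ s, 0 ≤ ψ s := by
      intro s
      simp only [hψd]
      split
      · exact le_rfl
      · exact mul_nonneg (by norm_num) (mul_nonneg (hD_pos _).le (hD_pos _).le)
    have hψle : ∀ s, ψ s ≤ (1/4) * (D s * D (v + s)) := by
      intro s
      simp only [hψd]
      split
      · exact mul_nonneg (by norm_num) (mul_nonneg (hD_pos _).le (hD_pos _).le)
      · exact le_rfl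
    have hψsum : Summable ψ := Summable.of_nonneg_of_le hψnn hψle ((hsumDD v).mul_left (1/4))
    have hpoint : ∀ s, ψ s - χ s ≤ a s * a (v + s) := by
      intro s
      simp only [hψd, hχd]
      by_cases h : s ∈ bad
      · simp only [if_pos h]
        have := neg_abs_le (a s * a (v + s))
        linarith
      · simp only [if_neg h]
        obtain ⟨hg1', hg2'⟩ := hgood s h
        rw [ha' s, ha' (v + s)]
        have hD1 := hD_pos s
        have hD2 := hD_pos (v + s)
        have hab : (1/4 : ℝ) ≤ g s * g (v + s) := by nlinarith
        have hm := mul_le_mul_of_nonneg_right hab (mul_pos hD1 hD2).le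
        nlinarith [hm]
    have hr0 := hr v
    have hlow : ∑' s, ψ s - ∑' s, χ s ≤ r v := by
      have h := Summable.tsum_le_tsum hpoint (hψsum.sub hχsum) (hsumaa v)
      rw [Summable.tsum_sub hψsum hχsum] at h
      rw [hr0]
      exact h
    have hχbound : ∑' s, χ s ≤ (bad.card : ℝ) * (K1 * T ^ (-q3)) := by
      rw [tsum_eq_sum hχ0]
      have h := Finset.sum_le_card_nsmul bad χ (K1 * T ^ (-q3)) (fun s hs => by
        simp only [hχd, if_pos hs]; exact hbada s hs)
      rwa [nsmul_eq_mul] at h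
    -- the box
    set N1 : ℤ := ((⌊T ^ (q3 / q1)⌋₊ : ℕ) : ℤ) with hN1d
    set N2 : ℤ := ((⌊T ^ (q3 / q2)⌋₊ : ℕ) : ℤ) with hN2d
    set N3 : ℤ := ((⌊T ^ (q3 / q3)⌋₊ : ℕ) : ℤ) with hN3d
    set Box : Finset (ℤ × ℤ × ℤ) :=
      Finset.Icc 0 N1 ×ˢ (Finset.Icc 0 N2 ×ˢ Finset.Icc 0 N3) with hBoxd
    clear_value N1 N2 N3 Box
    have hTe3 : T ^ (q3 / q3) = T := by rw [div_self hq3.ne', Real.rpow_one]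
    have hb1 : T ^ (q3 / q1) ≤ ((Finset.Icc (0:ℤ) N1).card : ℝ) := by
      rw [hN1d, aux_card_Icc]
      exact (Nat.lt_floor_add_one _).le
    have hb2 : T ^ (q3 / q2) ≤ ((Finset.Icc (0:ℤ) N2).card : ℝ) := by
      rw [hN2d, aux_card_Icc]
      exact (Nat.lt_floor_add_one _).le
    have hb3 : T ^ (q3 / q3) ≤ ((Finset.Icc (0:ℤ) N3).card : ℝ) := by
      rw [hN3d, aux_card_Icc]
      exact (Nat.lt_floor_add_one _).le
    have hcard : T ^ (q3 / q1) * (T ^ (q3 / q2) * T ^ (q3 / q3)) ≤ (Box.card : ℝ) := by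
      rw [hBoxd, Finset.card_product, Finset.card_product]
      push_cast
      have h23 : T ^ (q3 / q2) * T ^ (q3 / q3) ≤
          ((Finset.Icc (0:ℤ) N2).card : ℝ) * ((Finset.Icc (0:ℤ) N3).card : ℝ) :=
        mul_le_mul hb2 hb3 (Real.rpow_nonneg hT0.le _) (Nat.cast_nonneg _)
      exact mul_le_mul hb1 h23
        (mul_nonneg (Real.rpow_nonneg hT0.le _) (Real.rpow_nonneg hT0.le _))
        (Nat.cast_nonneg _)
    -- lower bound for D on the box
    have hDbox : ∀ s ∈ Box, κ1 * T ^ (-q3) ≤ D s ∧ κ2 * T ^ (-q3) ≤ D (v + s) := by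
      intro s hs
      rw [hBoxd, Finset.mem_product] at hs
      obtain ⟨hs1, hs23⟩ := hs
      rw [Finset.mem_product] at hs23
      obtain ⟨hs2, hs3⟩ := hs23
      rw [Finset.mem_Icc] at hs1 hs2 hs3
      have hTq3ν : (0:ℝ) < T ^ (q3 / ν) := Real.rpow_pos_of_pos hT0 _
      have h2q3ν : (1:ℝ) ≤ 2 ^ (q3 / ν) := Real.one_le_rpow one_le_two (by positivity)
      have hm1 : mn s.1 ≤ T ^ (q3 / q1) := by
        rw [hmn]
        apply max_le
        · rw [abs_of_nonneg (by exact_mod_cast hs1.1 : (0:ℝ) ≤ (s.1 : ℝ))]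
          calc (s.1 : ℝ) ≤ (N1 : ℝ) := by exact_mod_cast hs1.2
            _ ≤ T ^ (q3 / q1) := by
                rw [hN1d]; push_cast; exact Nat.floor_le (Real.rpow_nonneg hT0.le _)
        · exact Real.one_le_rpow hT1 (by positivity)
      have hm2 : mn s.2.1 ≤ T ^ (q3 / q2) := by
        rw [hmn]
        apply max_le
        · rw [abs_of_nonneg (by exact_mod_cast hs2.1 : (0:ℝ) ≤ (s.2.1 : ℝ))]
          calc (s.2.1 : ℝ) ≤ (N2 : ℝ) := by exact_mod_cast hs2.2
            _ ≤ T ^ (q3 / q2) := by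
                rw [hN2d]; push_cast; exact Nat.floor_le (Real.rpow_nonneg hT0.le _)
        · exact Real.one_le_rpow hT1 (by positivity)
      have hm3 : mn s.2.2 ≤ T := by
        rw [hmn]
        apply max_le
        · rw [abs_of_nonneg (by exact_mod_cast hs3.1 : (0:ℝ) ≤ (s.2.2 : ℝ))]
          calc (s.2.2 : ℝ) ≤ (N3 : ℝ) := by exact_mod_cast hs3.2
            _ ≤ T := by
                rw [hN3d]; push_cast
                exact le_trans (Nat.floor_le (Real.rpow_nonneg hT0.le _)) (le_of_eq hTe3)
        · exact hT1
      have hrp1 : mn s.1 ^ (q1 / ν) ≤ T ^ (q3 / ν) := by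
        calc mn s.1 ^ (q1 / ν) ≤ (T ^ (q3 / q1)) ^ (q1 / ν) :=
              Real.rpow_le_rpow (hmnn _) hm1 (by positivity)
          _ = T ^ (q3 / ν) := by
              rw [← Real.rpow_mul hT0.le, show q3 / q1 * (q1 / ν) = q3 / ν by field_simp]
      have hrp2 : mn s.2.1 ^ (q2 / ν) ≤ T ^ (q3 / ν) := by
        calc mn s.2.1 ^ (q2 / ν) ≤ (T ^ (q3 / q2)) ^ (q2 / ν) :=
              Real.rpow_le_rpow (hmnn _) hm2 (by positivity)
          _ = T ^ (q3 / ν) := by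
              rw [← Real.rpow_mul hT0.le, show q3 / q2 * (q2 / ν) = q3 / ν by field_simp]
      have hrp3 : mn s.2.2 ^ (q3 / ν) ≤ T ^ (q3 / ν) :=
        Real.rpow_le_rpow (hmnn _) hm3 (by positivity)
      have hinvκ1 : (csum ^ ν * T ^ q3)⁻¹ = κ1 * T ^ (-q3) := by
        rw [hκ1, mul_inv, Real.rpow_neg hT0.le]
      constructor
      · -- D s bound
        have hden1 : den s ≤ csum * T ^ (q3 / ν) := by
          simp only [hdendef, hcsum]
          have e1 := mul_le_mul_of_nonneg_left hrp1 hc1.le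
          have e2 := mul_le_mul_of_nonneg_left hrp2 hc2.le
          have e3 := mul_le_mul_of_nonneg_left hrp3 hc3.le
          linarith
        have hpow : den s ^ ν ≤ csum ^ ν * T ^ q3 := by
          calc den s ^ ν ≤ (csum * T ^ (q3 / ν)) ^ ν :=
                Real.rpow_le_rpow (hden_pos s).le hden1 hν.le
            _ = csum ^ ν * T ^ q3 := by
                rw [Real.mul_rpow hcsum0.le (Real.rpow_nonneg hT0.le _),
                  ← Real.rpow_mul hT0.le, show q3 / ν * ν = q3 by field_simp]
        rw [hDdef, ← hinvκ1]
        exact inv_anti₀ (Real.rpow_pos_of_pos (hden_pos s) ν) hpow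
      · -- D (v+s) bound
        have he1 : (v + s).1 = s.1 := by simp [hvd, Prod.fst_add]
        have he2 : (v + s).2.1 = s.2.1 := by simp [hvd, Prod.snd_add, Prod.fst_add]
        have he3 : (v + s).2.2 = (t : ℤ) + s.2.2 := by simp [hvd, Prod.snd_add]
        have hm3' : mn ((v + s).2.2) ≤ 2 * T := by
          rw [he3, hmn]
          apply max_le
          · have h0 : (0:ℝ) ≤ (s.2.2 : ℝ) := by exact_mod_cast hs3.1
            have hub : (s.2.2 : ℝ) ≤ T := by
              calc (s.2.2 : ℝ) ≤ (N3 : ℝ) := by exact_mod_cast hs3.2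
                _ ≤ T := by
                    rw [hN3d]; push_cast
                    exact le_trans (Nat.floor_le (Real.rpow_nonneg hT0.le _)) (le_of_eq hTe3)
            push_cast
            rw [← hTd, abs_of_nonneg (by linarith)]
            linarith
          · linarith
        have hrp3' : mn ((v + s).2.2) ^ (q3 / ν) ≤ 2 ^ (q3 / ν) * T ^ (q3 / ν) := by
          calc mn ((v + s).2.2) ^ (q3 / ν) ≤ (2 * T) ^ (q3 / ν) :=
                Real.rpow_le_rpow (hmnn _) hm3' (by positivity)
            _ = 2 ^ (q3 / ν) * T ^ (q3 / ν) :=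
                Real.mul_rpow (by norm_num) hT0.le
        have hrp1' : mn ((v + s).1) ^ (q1 / ν) ≤ 2 ^ (q3 / ν) * T ^ (q3 / ν) := by
          rw [he1]
          calc mn s.1 ^ (q1 / ν) ≤ T ^ (q3 / ν) := hrp1
            _ = 1 * T ^ (q3 / ν) := (one_mul _).symm
            _ ≤ 2 ^ (q3 / ν) * T ^ (q3 / ν) :=
                mul_le_mul_of_nonneg_right h2q3ν hTq3ν.le
        have hrp2' : mn ((v + s).2.1) ^ (q2 / ν) ≤ 2 ^ (q3 / ν) * T ^ (q3 / ν) := by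
          rw [he2]
          calc mn s.2.1 ^ (q2 / ν) ≤ T ^ (q3 / ν) := hrp2
            _ = 1 * T ^ (q3 / ν) := (one_mul _).symm
            _ ≤ 2 ^ (q3 / ν) * T ^ (q3 / ν) :=
                mul_le_mul_of_nonneg_right h2q3ν hTq3ν.le
        have hden2 : den (v + s) ≤ csum * (2 ^ (q3 / ν) * T ^ (q3 / ν)) := by
          simp only [hdendef, hcsum]
          have e1 := mul_le_mul_of_nonneg_left hrp1' hc1.le
          have e2 := mul_le_mul_of_nonneg_left hrp2' hc2.le
          have e3 := mul_le_mul_of_nonneg_left hrp3' hc3.le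
          linarith
        have hpow : den (v + s) ^ ν ≤ csum ^ ν * (2 ^ q3 * T ^ q3) := by
          calc den (v + s) ^ ν ≤ (csum * (2 ^ (q3 / ν) * T ^ (q3 / ν))) ^ ν :=
                Real.rpow_le_rpow (hden_pos _).le hden2 hν.le
            _ = csum ^ ν * (2 ^ q3 * T ^ q3) := by
                rw [Real.mul_rpow hcsum0.le (by positivity),
                  Real.mul_rpow (by positivity : (0:ℝ) ≤ 2 ^ (q3 / ν)) hTq3ν.le,
                  ← Real.rpow_mul (by norm_num : (0:ℝ) ≤ 2),
                  ← Real.rpow_mul hT0.le, show q3 / ν * ν = q3 by field_simp]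
        have hinvκ2 : (csum ^ ν * (2 ^ q3 * T ^ q3))⁻¹ = κ2 * T ^ (-q3) := by
          rw [hκ2, Real.rpow_neg hT0.le, ← mul_assoc, mul_inv]
        rw [hDdef, ← hinvκ2]
        exact inv_anti₀ (Real.rpow_pos_of_pos (hden_pos _) ν) hpow
    -- sum over the box
    have hperterm : (0:ℝ) ≤ (1/4) * (κ1 * T ^ (-q3) * (κ2 * T ^ (-q3))) := by
      have := hκ1pos; have := hκ2pos; positivity
    have hmainsum : (T ^ (q3 / q1) * (T ^ (q3 / q2) * T ^ (q3 / q3))) *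
        ((1/4) * (κ1 * T ^ (-q3) * (κ2 * T ^ (-q3)))) ≤
        Box.sum (fun s => (1/4) * (D s * D (v + s))) := by
      have h := Finset.card_nsmul_le_sum Box (fun s => (1/4) * (D s * D (v + s)))
        ((1/4) * (κ1 * T ^ (-q3) * (κ2 * T ^ (-q3)))) (fun s hs => by
          obtain ⟨h1, h2⟩ := hDbox s hs
          have := mul_le_mul h1 h2 (by positivity) (hD_pos s).le
          linarith)
      rw [nsmul_eq_mul] at h
      exact le_trans (mul_le_mul_of_nonneg_right hcard hperterm) h
    -- bad part inside the box
    have hbadbox : Box.sum (fun s => if s ∈ bad then (1/4) * (D s * D (v + s)) else 0) ≤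
        (bad.card : ℝ) * (K1 * T ^ (-q3)) := by
      rw [← Finset.sum_filter]
      have hsub : Box.filter (· ∈ bad) ⊆ bad := fun x hx => (Finset.mem_filter.mp hx).2
      have hKT0 : (0:ℝ) ≤ K1 * T ^ (-q3) := by positivity
      have h := Finset.sum_le_card_nsmul (Box.filter (· ∈ bad))
        (fun s => (1/4) * (D s * D (v + s))) (K1 * T ^ (-q3)) (fun s hs => by
          have hsbad := (Finset.mem_filter.mp hs).2
          have hDD := hbadDD s hsbad
          have hDDnn : (0:ℝ) ≤ D s * D (v + s) := mul_nonneg (hD_pos _).le (hD_pos _).le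
          calc (1/4) * (D s * D (v + s)) ≤ D s * D (v + s) := by linarith
            _ ≤ κ1 * ((c3 ^ ν)⁻¹ * (2 ^ q3 * T ^ (-q3))) := hDD
            _ ≤ K1 * T ^ (-q3) := hK1T)
      rw [nsmul_eq_mul] at h
      calc (Box.filter (· ∈ bad)).sum (fun s => (1/4) * (D s * D (v + s)))
          ≤ ((Box.filter (· ∈ bad)).card : ℝ) * (K1 * T ^ (-q3)) := h
        _ ≤ (bad.card : ℝ) * (K1 * T ^ (-q3)) := by
            apply mul_le_mul_of_nonneg_right _ hKT0
            exact_mod_cast Finset.card_le_card hsub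
    have hboxψ : Box.sum (fun s => (1/4) * (D s * D (v + s))) -
        (bad.card : ℝ) * (K1 * T ^ (-q3)) ≤ Box.sum ψ := by
      have hsplit : ∀ s ∈ Box, (1/4) * (D s * D (v + s)) -
          (if s ∈ bad then (1/4) * (D s * D (v + s)) else 0) ≤ ψ s := by
        intro s _
        simp only [hψd]
        by_cases h : s ∈ bad <;> simp [h]
      have h := Finset.sum_le_sum hsplit
      rw [Finset.sum_sub_distrib] at h
      linarith [hbadbox]
    have hψtsum : Box.sum ψ ≤ ∑' s, ψ s := Summable.sum_le_tsum Box (fun s _ => hψnn s) hψsum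
    -- combine
    have hTpow : T ^ (q3 / q1) * (T ^ (q3 / q2) * T ^ (q3 / q3)) * (T ^ (-q3) * T ^ (-q3))
        = T ^ β := by
      rw [← Real.rpow_add hT0, ← Real.rpow_add hT0, ← Real.rpow_add hT0, ← Real.rpow_add hT0]
      congr 1
      rw [hβ, div_self hq3.ne']
      ring
    have hmainval : (T ^ (q3 / q1) * (T ^ (q3 / q2) * T ^ (q3 / q3))) *
        ((1/4) * (κ1 * T ^ (-q3) * (κ2 * T ^ (-q3)))) = (1/4) * κ1 * κ2 * T ^ β := by
      rw [← hTpow]; ring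
    have herr : 2 * ((bad.card : ℝ) * (K1 * T ^ (-q3))) ≤ CF * T ^ (-q3) := by
      rw [hCF]
      have h1 : 2 * (bad.card : ℝ) * K1 ≤ 4 * (F.card : ℝ) * K1 := by
        apply mul_le_mul_of_nonneg_right _ hK1pos.le
        linarith
      have h2 := mul_le_mul_of_nonneg_right h1 hTq3.le
      linarith [hTq3]
    set SB : ℝ := Box.sum (fun s => (1/4) * (D s * D (v + s))) with hSBd
    set Sψ : ℝ := Box.sum ψ with hSψd
    set Tψ : ℝ := ∑' s, ψ s with hTψd
    set Tχ : ℝ := ∑' s, χ s with hTχd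
    clear_value SB Sψ Tψ Tχ
    have hmainval2 : (1/4 : ℝ) * κ1 * κ2 * T ^ β ≤ SB := by rw [← hmainval]; exact hmainsum
    linarith [hmainval2, hboxψ, hψtsum, hχbound, hlow]
  -- eventual lower bound
  have hev : ∀ᶠ t : ℕ in atTop, (1/8 : ℝ) * κ1 * κ2 * (t : ℝ) ^ β ≤ r (0, 0, (t : ℤ)) := by
    have htend : Tendsto (fun t : ℕ => ((t : ℝ)) ^ (q3 + β)) atTop atTop :=
      (tendsto_rpow_atTop hq3β).comp tendsto_natCast_atTop_atTop
    filter_upwards [htend.eventually_ge_atTop (CF / ((1/8) * κ1 * κ2)),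
      eventually_ge_atTop (2 * B + 2), eventually_ge_atTop 1] with t h1 h2 h3
    have ht0 : (0:ℝ) < (t : ℝ) := by exact_mod_cast h3
    have herr : CF * (t : ℝ) ^ (-q3) ≤ (1/8 : ℝ) * κ1 * κ2 * (t : ℝ) ^ β := by
      have hrw : ((t:ℝ) ^ (q3 + β)) * (t : ℝ) ^ (-q3) = (t : ℝ) ^ β := by
        rw [← Real.rpow_add ht0]; ring_nf
      have hpos : (0:ℝ) < (t : ℝ) ^ (-q3) := Real.rpow_pos_of_pos ht0 _
      have h4 : CF / ((1/8) * κ1 * κ2) * (t : ℝ) ^ (-q3) ≤ ((t:ℝ) ^ (q3 + β)) * (t : ℝ) ^ (-q3) :=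
        mul_le_mul_of_nonneg_right h1 hpos.le
      rw [hrw] at h4
      have hc : (0:ℝ) < (1/8) * κ1 * κ2 := by positivity
      calc CF * (t : ℝ) ^ (-q3) = ((1/8) * κ1 * κ2) * (CF / ((1/8) * κ1 * κ2) * (t : ℝ) ^ (-q3)) := by
            field_simp
          _ ≤ ((1/8) * κ1 * κ2) * ((t:ℝ) ^ β) := by
            exact mul_le_mul_of_nonneg_left h4 hc.le
          _ = (1/8 : ℝ) * κ1 * κ2 * (t : ℝ) ^ β := by ring
    have hk := key t h2
    have h8 : (1/8 : ℝ) * κ1 * κ2 * (t : ℝ) ^ β ≤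
        (1/4 : ℝ) * κ1 * κ2 * (t : ℝ) ^ β - CF * (t : ℝ) ^ (-q3) := by
      have hpos : (0:ℝ) ≤ (t : ℝ) ^ β := (Real.rpow_pos_of_pos ht0 _).le
      nlinarith
    linarith
  -- conclusion
  intro hsum
  obtain ⟨T, hT⟩ := hev.exists_forall_of_atTop
  have hsumN : Summable (fun n : ℕ => |r (0, 0, (n : ℤ))|) := by
    have h := hsum.comp_injective (i := ((↑·) : ℕ → ℤ)) (fun x y h => by simpa using h)
    exact h.congr fun n => rfl
  have hsumN2 : Summable (fun n : ℕ => |r (0, 0, ((n + T : ℕ) : ℤ))|) :=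
    (summable_nat_add_iff T).mpr hsumN
  have hc0 : (0:ℝ) < (1/8 : ℝ) * κ1 * κ2 := by positivity
  have hsum3 : Summable (fun n : ℕ => ((1/8 : ℝ) * κ1 * κ2) * ((n + T : ℕ) : ℝ) ^ β) := by
    refine Summable.of_nonneg_of_le (fun n => ?_) (fun n => ?_) hsumN2
    · positivity
    · calc ((1/8 : ℝ) * κ1 * κ2) * ((n + T : ℕ) : ℝ) ^ β
          = (1/8 : ℝ) * κ1 * κ2 * ((n + T : ℕ) : ℝ) ^ β := by ring
        _ ≤ r (0, 0, ((n + T : ℕ) : ℤ)) := hT (n + T) (Nat.le_add_left _ _)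
        _ ≤ |r (0, 0, ((n + T : ℕ) : ℤ))| := le_abs_self _
  have hsum4 : Summable (fun n : ℕ => ((n + T : ℕ) : ℝ) ^ β) :=
    (summable_mul_left_iff hc0.ne').mp hsum3
  have hsum5 : Summable (fun n : ℕ => ((n : ℝ)) ^ β) :=
    (summable_nat_add_iff T).mp hsum4
  have := Real.summable_nat_rpow.mp hsum5
  linarith
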